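/- Every acyclic digraph D on n vertices occurs in every tournament on at least 2^{n−1} vertices: there is an injective map from the vertices of D to the vertices of the tournament such that every edge u→v of D is mapped to an edge of the tournament. -/

import Mathlib

/-- A tournament on Fin n: the relation is asymmetric and total on distinct pairs. -/
def IsTournament {n : ℕ} (r : Fin n → Fin n → Prop) : Prop :=
  (∀ u v : Fin n, r u v → ¬ r v u) ∧ (∀ u v : Fin n, u ≠ v → r u v ∨ r v u)

/-- An m-star: an m-element vertex set with a center dominating all other members. -/
def IsMStar {n : ℕ} (r : Fin n → Fin n → Prop) (m : ℕ) (S : Finset (Fin n)) : Prop :=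
  S.card = m ∧ ∃ c ∈ S, ∀ v ∈ S, v ≠ c → r c v

/-- An m-star-factor: a partition of the vertex set into pairwise disjoint m-stars. -/
def HasStarFactor {n : ℕ} (r : Fin n → Fin n → Prop) (m : ℕ) : Prop :=
  ∃ P : Finset (Finset (Fin n)), (∀ S ∈ P, IsMStar r m S) ∧
    (P : Set (Finset (Fin n))).PairwiseDisjoint id ∧ P.biUnion id = Finset.univ

lemma embed_aux (n : ℕ) : ∀ (V W : Type) [Fintype V] [Fintype W]
    (D : V → V → Prop) (r : W → W → Prop),
    Fintype.card V = n →
    (∀ v, ¬ Relation.TransGen D v v) →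
    (∀ u v : W, u ≠ v → r u v ∨ r v u) →
    2 ^ (n - 1) ≤ Fintype.card W →
    ∃ f : V → W, Function.Injective f ∧ ∀ u v, D u v → r (f u) (f v) := by
  induction n with
  | zero =>
    intro V W _ _ D r hV _ _ _
    have : IsEmpty V := Fintype.card_eq_zero_iff.mp hV
    exact ⟨isEmptyElim, fun a => isEmptyElim a, fun u => isEmptyElim u⟩
  | succ m ih =>
    intro V W _ _ D r hV hacyc htot hcard
    classical
    -- find a source s of D
    have htrans : IsTrans V (Relation.TransGen D) := ⟨fun _ _ _ => Relation.TransGen.trans⟩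
    have hirr : IsIrrefl V (Relation.TransGen D) := ⟨hacyc⟩
    have hVne : (Finset.univ : Finset V).Nonempty := by
      rw [← Finset.card_pos, Finset.card_univ, hV]; omega
    obtain ⟨v0, -⟩ := hVne
    obtain ⟨s, -, hs⟩ := (Finite.wellFounded_of_trans_of_irrefl (Relation.TransGen D)).has_min
      Set.univ ⟨v0, trivial⟩
    have hsrc : ∀ u, ¬ D u s := fun u hu =>
      hs u (Set.mem_univ u) (Relation.TransGen.single hu)
    rcases Nat.eq_zero_or_pos m with hm | hm
    · -- card V = 1
      subst hm
      have hWne : Nonempty W := by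
        have : 0 < Fintype.card W := lt_of_lt_of_le (by norm_num) hcard
        exact Fintype.card_pos_iff.mp this
      obtain ⟨w⟩ := hWne
      have hsub : ∀ a b : V, a = b := by
        have h1 : Fintype.card V = 1 := hV
        intro a b
        obtain ⟨c, hc⟩ := Fintype.card_eq_one_iff.mp h1
        rw [hc a, hc b]
      refine ⟨fun _ => w, fun a b _ => hsub a b, fun u v huv => ?_⟩
      exact (hacyc v (Relation.TransGen.single (by rwa [hsub u v] at huv))).elim
    · -- m ≥ 1
      set N' := Fintype.card W with hN'
      have hNW : 2 ^ m ≤ N' := by simpa using hcard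
      -- outdegree function
      set g : W → ℕ := fun x => (Finset.univ.filter (fun y => y ≠ x ∧ r x y)).card with hg
      have hWne : (Finset.univ : Finset W).Nonempty := by
        rw [← Finset.card_pos, Finset.card_univ, ← hN']
        calc 0 < 2 ^ m := Nat.pow_pos (by norm_num)
        _ ≤ N' := hNW
      -- sum bound
      have hsum : ∑ _x : W, (N' - 1) ≤ ∑ x : W, 2 * g x := by
        have h1 : ∀ x : W, g x = ∑ y : W, if y ≠ x ∧ r x y then 1 else 0 := by
          intro x; rw [hg]; exact Finset.card_filter _ _
        calc ∑ _x : W, (N' - 1)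
            = ∑ x : W, ∑ y : W, (if y ≠ x then 1 else 0) := by
              refine Finset.sum_congr rfl fun x _ => ?_
              rw [← Finset.card_filter, Finset.filter_ne', Finset.card_erase_of_mem
                (Finset.mem_univ x), Finset.card_univ]
          _ ≤ ∑ x : W, ∑ y : W, ((if y ≠ x ∧ r x y then 1 else 0) + (if x ≠ y ∧ r y x then 1 else 0)) := by
              refine Finset.sum_le_sum fun x _ => Finset.sum_le_sum fun y _ => ?_
              by_cases hxy : y = x
              · simp [hxy]
              · rcases htot x y (Ne.symm hxy) with h | h
                · simp [hxy, h]
                · simp [hxy, Ne.symm hxy, h]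
          _ = ∑ x : W, 2 * g x := by
              have hswap : (∑ x : W, ∑ y : W, if x ≠ y ∧ r y x then (1:ℕ) else 0)
                  = ∑ x : W, ∑ y : W, if y ≠ x ∧ r x y then (1:ℕ) else 0 := Finset.sum_comm
              simp only [Finset.sum_add_distrib, hswap, h1, two_mul]
      obtain ⟨x, -, hx⟩ := Finset.exists_le_of_sum_le hWne hsum
      -- so N' - 1 ≤ 2 * g x, hence 2^(m-1) ≤ g x
      have hgx : 2 ^ (m - 1) ≤ g x := by
        have h2 : 2 ^ m = 2 * 2 ^ (m - 1) := by
          rw [← pow_succ']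
          congr 1
          omega
        omega
      -- subtypes
      set W' := {w : W // w ≠ x ∧ r x w} with hW'def
      have hcardW' : Fintype.card W' = g x := by
        rw [hg]; exact Fintype.card_subtype _
      set V' := {v : V // v ≠ s} with hV'def
      have hcardV' : Fintype.card V' = m := by
        rw [Fintype.card_subtype, Finset.filter_ne', Finset.card_erase_of_mem
          (Finset.mem_univ s), Finset.card_univ, hV]
        omega
      have hacyc' : ∀ v : V', ¬ Relation.TransGen (fun a b : V' => D a.1 b.1) v v := by
        intro v hv
        exact hacyc v.1 (Relation.TransGen.lift Subtype.val (fun a b h => h) v v hv)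
      have htot' : ∀ u v : W', u ≠ v → r u.1 v.1 ∨ r v.1 u.1 := by
        intro u v huv
        exact htot u.1 v.1 (fun h => huv (Subtype.ext h))
      obtain ⟨f', hf'inj, hf'edge⟩ := ih V' W' (fun a b => D a.1 b.1) (fun a b => r a.1 b.1)
        hcardV' hacyc' htot' (by rw [hcardW']; exact le_trans hgx (le_refl _))
      refine ⟨fun v => if h : v = s then x else (f' ⟨v, h⟩).1, ?_, ?_⟩
      · intro a b hab
        by_cases ha : a = s <;> by_cases hb : b = s <;> simp [ha, hb] at hab ⊢
        · exact absurd hab.symm (f' ⟨b, hb⟩).2.1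
        · exact absurd hab (f' ⟨a, ha⟩).2.1
        · exact congrArg Subtype.val (hf'inj (Subtype.ext hab))
      · intro u v huv
        by_cases hu : u = s
        · have hv : v ≠ s := by
            intro hv
            exact hacyc s (Relation.TransGen.single (by rw [hu, hv] at huv; exact huv))
          simp only [dif_pos hu, dif_neg hv]
          exact (f' ⟨v, hv⟩).2.2
        · have hv : v ≠ s := fun hv => hsrc u (hv ▸ huv)
          simp only [dif_neg hu, dif_neg hv]
          exact hf'edge ⟨u, hu⟩ ⟨v, hv⟩ huv

theorem acyclic_digraph_in_tournament (n N : ℕ) (D : Fin n → Fin n → Prop)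
    (hacyc : ∀ v : Fin n, ¬ Relation.TransGen D v v)
    (hN : 2 ^ (n - 1) ≤ N)
    (r : Fin N → Fin N → Prop) (hr : IsTournament r) :
    ∃ f : Fin n → Fin N, Function.Injective f ∧ ∀ u v : Fin n, D u v → r (f u) (f v) := by
  exact embed_aux n (Fin n) (Fin N) D r (Fintype.card_fin n) hacyc
    (fun u v h => hr.2 u v h) (by simpa using hN)
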